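/- arXiv:2601.10792 — 4 statements merged into one kernel-verified Lean document; each statement's English description precedes it below -/
import Mathlib

section
/- Let X_A, X_B, X_C and F_A, F_B, F_C be finitely-valued random variables on a finite probability space. Assume that F_A, F_B, F_C are mutually independent, that the pair (X_A, X_B) is conditionally independent of F_C given (F_A, F_B), that the pair (X_B, X_C) is conditionally independent of F_A given (F_B, F_C), and that X_B is conditionally independent of (F_A, F_C) given F_B. Then the conditional mutual information satisfies I((X_A, F_A) : (X_C, F_C) | (X_B, F_B)) = I(X_A : X_C | (X_B, F_A, F_B, F_C)); that is, the CMI of the flagged ensemble equals the average over flag configurations f of the CMI of X_A and X_C given X_B computed in the conditional distribution given (F_A, F_B, F_C) = f. -/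
/-!
STATEMENT 0: For finitely-valued random variables `X_A, X_B, X_C` and mutually independent
flags `F_A, F_B, F_C` on a finite probability space, with the stated conditional-independence
assumptions, the conditional mutual information of the flagged ensemble satisfies
`I((X_A,F_A) : (X_C,F_C) | (X_B,F_B)) = I(X_A : X_C | (X_B,F_A,F_B,F_C))`.
-/

noncomputable section

/-- Probability of an event under a pmf `p` on a finite sample space. -/
def pr {Ω : Type*} [Fintype Ω] (p : Ω → ℝ) (E : Set Ω) : ℝ :=
  ∑ ω, E.indicator p ω

/-- Distribution (pmf) of the random variable `X` under `p`. -/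
def distOf {Ω S : Type*} [Fintype Ω] (p : Ω → ℝ) (X : Ω → S) (s : S) : ℝ :=
  pr p {ω | X ω = s}

/-- Shannon entropy (natural logarithm) of the random variable `X` under `p`. -/
def entH {Ω S : Type*} [Fintype Ω] [Fintype S] (p : Ω → ℝ) (X : Ω → S) : ℝ :=
  ∑ s, Real.negMulLog (distOf p X s)

/-- Conditional mutual information `I(X : Y | Z)`. -/
def cmi {Ω S T U : Type*} [Fintype Ω] [Fintype S] [Fintype T] [Fintype U]
    (p : Ω → ℝ) (X : Ω → S) (Y : Ω → T) (Z : Ω → U) : ℝ :=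
  entH p (fun ω => (X ω, Z ω)) + entH p (fun ω => (Y ω, Z ω)) - entH p Z
    - entH p (fun ω => (X ω, Y ω, Z ω))

/-- Mutual independence of a triple of random variables (for probability distributions,
pointwise factorization of the joint pmf of all three variables into the product of the
marginals is equivalent to mutual independence). -/
def IndepTriple {Ω S T U : Type*} [Fintype Ω]
    (p : Ω → ℝ) (X : Ω → S) (Y : Ω → T) (Z : Ω → U) : Prop :=
  ∀ (x : S) (y : T) (z : U),
    pr p {ω | X ω = x ∧ Y ω = y ∧ Z ω = z} =
      pr p {ω | X ω = x} * pr p {ω | Y ω = y} * pr p {ω | Z ω = z}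

/-- `X` and `Y` are conditionally independent given `Z`. -/
def CondIndepGiven {Ω S T U : Type*} [Fintype Ω]
    (p : Ω → ℝ) (X : Ω → S) (Y : Ω → T) (Z : Ω → U) : Prop :=
  ∀ (x : S) (y : T) (z : U),
    pr p {ω | X ω = x ∧ Y ω = y ∧ Z ω = z} * pr p {ω | Z ω = z} =
      pr p {ω | X ω = x ∧ Z ω = z} * pr p {ω | Y ω = y ∧ Z ω = z}

lemma pr_nonneg {Ω : Type*} [Fintype Ω] {p : Ω → ℝ} (hp0 : ∀ ω, 0 ≤ p ω) (E : Set Ω) :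
    0 ≤ pr p E := by
  apply Finset.sum_nonneg; intro ω _
  by_cases h : ω ∈ E
  · simp [Set.indicator_of_mem h, hp0]
  · simp [Set.indicator_of_notMem h]

lemma pr_fiber {Ω T : Type*} [Fintype Ω] [Fintype T] (p : Ω → ℝ) (E : Set Ω) (V : Ω → T) :
    pr p E = ∑ v, pr p (E ∩ {ω | V ω = v}) := by
  classical
  unfold pr
  rw [Finset.sum_comm]
  refine Finset.sum_congr rfl fun ω _ => ?_
  simp only [Set.indicator_apply, Set.mem_inter_iff, Set.mem_setOf_eq]
  by_cases h : ω ∈ E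
  · simp [h, Finset.sum_ite_eq]
  · simp [h]

lemma entH_congr_inj {Ω S T : Type*} [Fintype Ω] [Fintype S] [Fintype T]
    (p : Ω → ℝ) (X : Ω → S) (Y : Ω → T) (g : S → T) (hg : Function.Injective g)
    (hXY : ∀ ω, Y ω = g (X ω)) : entH p Y = entH p X := by
  classical
  unfold entH
  rw [← Finset.sum_subset (Finset.subset_univ (Finset.image g Finset.univ))]
  · rw [Finset.sum_image (fun a _ b _ h => hg h)]
    refine Finset.sum_congr rfl fun s _ => ?_
    congr 1
    unfold distOf
    congr 1
    ext ω
    simp [hXY, hg.eq_iff]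
  · intro t _ ht
    have : distOf p Y t = 0 := by
      unfold distOf pr
      apply Finset.sum_eq_zero
      intro ω _
      apply Set.indicator_of_notMem
      simp only [Set.mem_setOf_eq, hXY]
      rintro rfl
      exact ht (Finset.mem_image.mpr ⟨X ω, Finset.mem_univ _, rfl⟩)
    simp [this]

lemma ci_entropy {Ω S T U : Type*} [Fintype Ω] [Fintype S] [Fintype T] [Fintype U]
    (p : Ω → ℝ) (hp0 : ∀ ω, 0 ≤ p ω)
    (X : Ω → S) (Y : Ω → T) (Z : Ω → U)
    (h : CondIndepGiven p X Y Z) :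
    entH p (fun ω => (X ω, Y ω, Z ω)) + entH p Z
      = entH p (fun ω => (X ω, Z ω)) + entH p (fun ω => (Y ω, Z ω)) := by
  classical
  have ha : ∀ x z, pr p {ω | X ω = x ∧ Z ω = z}
      = ∑ y, pr p {ω | X ω = x ∧ Y ω = y ∧ Z ω = z} := by
    intro x z
    rw [pr_fiber p _ Y]
    refine Finset.sum_congr rfl fun y _ => ?_
    congr 1
    ext ω
    simp only [Set.mem_inter_iff, Set.mem_setOf_eq]
    tauto
  have hb : ∀ y z, pr p {ω | Y ω = y ∧ Z ω = z}
      = ∑ x, pr p {ω | X ω = x ∧ Y ω = y ∧ Z ω = z} := by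
    intro y z
    rw [pr_fiber p _ X]
    refine Finset.sum_congr rfl fun x _ => ?_
    congr 1
    ext ω
    simp only [Set.mem_inter_iff, Set.mem_setOf_eq]
    tauto
  have hc : ∀ z, pr p {ω | Z ω = z}
      = ∑ x, ∑ y, pr p {ω | X ω = x ∧ Y ω = y ∧ Z ω = z} := by
    intro z
    rw [pr_fiber p _ X]
    refine Finset.sum_congr rfl fun x _ => ?_
    rw [← ha]
    congr 1
    ext ω
    simp only [Set.mem_inter_iff, Set.mem_setOf_eq]
    tauto
  set j : S → T → U → ℝ := fun x y z => pr p {ω | X ω = x ∧ Y ω = y ∧ Z ω = z} with hj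
  set a : S → U → ℝ := fun x z => pr p {ω | X ω = x ∧ Z ω = z} with ha'
  set b : T → U → ℝ := fun y z => pr p {ω | Y ω = y ∧ Z ω = z} with hb'
  set c : U → ℝ := fun z => pr p {ω | Z ω = z} with hc'
  have hjnn : ∀ x y z, 0 ≤ j x y z := fun _ _ _ => pr_nonneg hp0 _
  have hH1 : entH p (fun ω => (X ω, Y ω, Z ω)) = ∑ x, ∑ y, ∑ z, Real.negMulLog (j x y z) := by
    unfold entH
    rw [Fintype.sum_prod_type]
    refine Finset.sum_congr rfl fun x _ => ?_
    rw [Fintype.sum_prod_type]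
    refine Finset.sum_congr rfl fun y _ => Finset.sum_congr rfl fun z _ => ?_
    simp only [hj]
    congr 1
    unfold distOf
    congr 1
    ext ω
    simp [Prod.ext_iff]
  have hH2 : entH p (fun ω => (X ω, Z ω)) = ∑ x, ∑ z, Real.negMulLog (a x z) := by
    unfold entH
    rw [Fintype.sum_prod_type]
    refine Finset.sum_congr rfl fun x _ => Finset.sum_congr rfl fun z _ => ?_
    simp only [ha']
    congr 1
    unfold distOf
    congr 1
    ext ω
    simp [Prod.ext_iff]
  have hH3 : entH p (fun ω => (Y ω, Z ω)) = ∑ y, ∑ z, Real.negMulLog (b y z) := by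
    unfold entH
    rw [Fintype.sum_prod_type]
    refine Finset.sum_congr rfl fun y _ => Finset.sum_congr rfl fun z _ => ?_
    simp only [hb']
    congr 1
    unfold distOf
    congr 1
    ext ω
    simp [Prod.ext_iff]
  have hH4 : entH p Z = ∑ z, Real.negMulLog (c z) := by
    unfold entH
    refine Finset.sum_congr rfl fun z _ => ?_
    simp only [hc']
    rfl
  have haj : ∀ x z, a x z = ∑ y, j x y z := ha
  have hbj : ∀ y z, b y z = ∑ x, j x y z := hb
  have hcj : ∀ z, c z = ∑ x, ∑ y, j x y z := hc
  have hB : (∑ x, ∑ z, Real.negMulLog (a x z))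
      = ∑ x, ∑ y, ∑ z, -(j x y z * Real.log (a x z)) := by
    refine Finset.sum_congr rfl fun x _ => ?_
    refine Eq.trans ?_ (Finset.sum_comm)
    refine Finset.sum_congr rfl fun z _ => ?_
    rw [Real.negMulLog, haj x z, neg_mul, Finset.sum_mul, ← Finset.sum_neg_distrib]
  have hC : (∑ y, ∑ z, Real.negMulLog (b y z))
      = ∑ x, ∑ y, ∑ z, -(j x y z * Real.log (b y z)) := by
    refine Eq.trans ?_ (Finset.sum_comm)
    refine Finset.sum_congr rfl fun y _ => ?_
    refine Eq.trans ?_ (Finset.sum_comm)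
    refine Finset.sum_congr rfl fun z _ => ?_
    rw [Real.negMulLog, hbj y z, neg_mul, Finset.sum_mul, ← Finset.sum_neg_distrib]
  have hD : (∑ z, Real.negMulLog (c z))
      = ∑ x, ∑ y, ∑ z, -(j x y z * Real.log (c z)) := by
    have step1 : (∑ z, Real.negMulLog (c z))
        = ∑ z, ∑ x, ∑ y, -(j x y z * Real.log (c z)) := by
      refine Finset.sum_congr rfl fun z _ => ?_
      rw [Real.negMulLog, hcj z, neg_mul, Finset.sum_mul, ← Finset.sum_neg_distrib]
      refine Finset.sum_congr rfl fun x _ => ?_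
      rw [Finset.sum_mul, ← Finset.sum_neg_distrib]
    rw [step1, Finset.sum_comm]
    exact Finset.sum_congr rfl fun x _ => Finset.sum_comm
  have key : ∀ x y z, Real.negMulLog (j x y z) + -(j x y z * Real.log (c z))
      = -(j x y z * Real.log (a x z)) + -(j x y z * Real.log (b y z)) := by
    intro x y z
    rcases (hjnn x y z).eq_or_lt with h0 | h0
    · simp [← h0]
    · have hja : 0 < a x z := by
        refine lt_of_lt_of_le h0 ?_
        rw [haj x z]
        exact Finset.single_le_sum (fun i _ => hjnn x i z) (Finset.mem_univ y)
      have hjb : 0 < b y z := by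
        refine lt_of_lt_of_le h0 ?_
        rw [hbj y z]
        exact Finset.single_le_sum (fun i _ => hjnn i y z) (Finset.mem_univ x)
      have hjc : 0 < c z := by
        refine lt_of_lt_of_le h0 ?_
        rw [hcj z]
        refine le_trans (Finset.single_le_sum (fun i _ => hjnn x i z) (Finset.mem_univ y)) ?_
        exact Finset.single_le_sum
          (fun i _ => Finset.sum_nonneg fun i' _ => hjnn i i' z) (Finset.mem_univ x)
      have hmul : j x y z * c z = a x z * b y z := h x y z
      have hlog : Real.log (j x y z) + Real.log (c z)
          = Real.log (a x z) + Real.log (b y z) := by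
        rw [← Real.log_mul h0.ne' hjc.ne', ← Real.log_mul hja.ne' hjb.ne', hmul]
      rw [Real.negMulLog]
      linear_combination (-(j x y z)) * hlog
  have main : (∑ x, ∑ y, ∑ z, (Real.negMulLog (j x y z) + -(j x y z * Real.log (c z))))
      = ∑ x, ∑ y, ∑ z, (-(j x y z * Real.log (a x z)) + -(j x y z * Real.log (b y z))) :=
    Finset.sum_congr rfl fun x _ => Finset.sum_congr rfl fun y _ =>
      Finset.sum_congr rfl fun z _ => key x y z
  rw [hH1, hH2, hH3, hH4, hB, hC, hD]
  simpa only [Finset.sum_add_distrib] using main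

lemma sum_dist_one {Ω T : Type*} [Fintype Ω] [Fintype T] (p : Ω → ℝ) (hp1 : ∑ ω, p ω = 1)
    (V : Ω → T) : ∑ t, pr p {ω | V ω = t} = 1 := by
  have h := pr_fiber p Set.univ V
  simp only [Set.univ_inter] at h
  rw [← h]
  simpa [pr] using hp1

/-- The flag-decomposition identity for the CMI of the flagged (heralded) ensemble:
the CMI of the flagged ensemble equals the flag-average of the conditional CMI, i.e.
`I((X_A,F_A) : (X_C,F_C) | (X_B,F_B)) = I(X_A : X_C | (X_B, F_A, F_B, F_C))`. -/
theorem flagged_cmi_decomposition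
    {Ω SA SB SC FA FB FC : Type*} [Fintype Ω]
    [Fintype SA] [Fintype SB] [Fintype SC] [Fintype FA] [Fintype FB] [Fintype FC]
    (p : Ω → ℝ) (hp0 : ∀ ω, 0 ≤ p ω) (hp1 : ∑ ω, p ω = 1)
    (XA : Ω → SA) (XB : Ω → SB) (XC : Ω → SC)
    (fA : Ω → FA) (fB : Ω → FB) (fC : Ω → FC)
    (hF : IndepTriple p fA fB fC)
    (h1 : CondIndepGiven p (fun ω => (XA ω, XB ω)) fC (fun ω => (fA ω, fB ω)))
    (h2 : CondIndepGiven p (fun ω => (XB ω, XC ω)) fA (fun ω => (fB ω, fC ω)))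
    (h3 : CondIndepGiven p XB (fun ω => (fA ω, fC ω)) fB) :
    cmi p (fun ω => (XA ω, fA ω)) (fun ω => (XC ω, fC ω)) (fun ω => (XB ω, fB ω)) =
      cmi p XA XC (fun ω => (XB ω, fA ω, fB ω, fC ω)) := by
  classical
  have hsumA : ∑ t : FA, pr p {ω | fA ω = t} = 1 := sum_dist_one p hp1 fA
  have hsumC : ∑ t : FC, pr p {ω | fC ω = t} = 1 := sum_dist_one p hp1 fC
  have hAB : ∀ (x : FA) (y : FB), pr p {ω | fA ω = x ∧ fB ω = y}
      = pr p {ω | fA ω = x} * pr p {ω | fB ω = y} := by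
    intro x y
    rw [pr_fiber p _ fC]
    have step : ∀ z : FC, pr p ({ω | fA ω = x ∧ fB ω = y} ∩ {ω | fC ω = z})
        = pr p {ω | fA ω = x} * pr p {ω | fB ω = y} * pr p {ω | fC ω = z} := by
      intro z
      rw [← hF x y z]
      congr 1
      ext ω
      simp only [Set.mem_inter_iff, Set.mem_setOf_eq]
      tauto
    rw [Finset.sum_congr rfl fun z _ => step z, ← Finset.mul_sum, hsumC, mul_one]
  have hCB : ∀ (x : FC) (y : FB), pr p {ω | fC ω = x ∧ fB ω = y}
      = pr p {ω | fC ω = x} * pr p {ω | fB ω = y} := by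
    intro x y
    rw [pr_fiber p _ fA]
    have step : ∀ z : FA, pr p ({ω | fC ω = x ∧ fB ω = y} ∩ {ω | fA ω = z})
        = pr p {ω | fC ω = x} * pr p {ω | fB ω = y} * pr p {ω | fA ω = z} := by
      intro z
      have hset : ({ω | fC ω = x ∧ fB ω = y} ∩ {ω | fA ω = z})
          = {ω | fA ω = z ∧ fB ω = y ∧ fC ω = x} := by
        ext ω
        simp only [Set.mem_inter_iff, Set.mem_setOf_eq]
        tauto
      rw [hset, hF z y x]
      ring
    rw [Finset.sum_congr rfl fun z _ => step z, ← Finset.mul_sum, hsumA, mul_one]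
  have hFAC : CondIndepGiven p fA fC fB := by
    intro x y z
    have hxyz : pr p {ω | fA ω = x ∧ fC ω = y ∧ fB ω = z}
        = pr p {ω | fA ω = x} * pr p {ω | fB ω = z} * pr p {ω | fC ω = y} := by
      rw [← hF x z y]
      congr 1
      ext ω
      simp only [Set.mem_setOf_eq]
      tauto
    rw [hxyz, hAB x z, hCB y z]
    ring
  have E1 := ci_entropy p hp0 (fun ω => (XA ω, XB ω)) fC (fun ω => (fA ω, fB ω)) h1
  have E2 := ci_entropy p hp0 (fun ω => (XB ω, XC ω)) fA (fun ω => (fB ω, fC ω)) h2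
  have E3 := ci_entropy p hp0 XB (fun ω => (fA ω, fC ω)) fB h3
  have E4 := ci_entropy p hp0 fA fC fB hFAC
  have S1 : entH p (fun ω => ((XA ω, XB ω), fC ω, (fA ω, fB ω)))
      = entH p (fun ω => (XA ω, XB ω, fA ω, fB ω, fC ω)) :=
    entH_congr_inj p _ _ (fun t => ((t.1, t.2.1), t.2.2.2.2, (t.2.2.1, t.2.2.2.1)))
      (fun u v huv => by simp [Prod.ext_iff] at huv ⊢; tauto) (fun ω => rfl)
  have S2 : entH p (fun ω => ((XA ω, XB ω), (fA ω, fB ω)))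
      = entH p (fun ω => ((XA ω, fA ω), (XB ω, fB ω))) :=
    entH_congr_inj p _ _ (fun t => ((t.1.1, t.2.1), (t.1.2, t.2.2)))
      (fun u v huv => by simp [Prod.ext_iff] at huv ⊢; tauto) (fun ω => rfl)
  have S3 : entH p (fun ω => (fC ω, (fA ω, fB ω)))
      = entH p (fun ω => (fA ω, fB ω, fC ω)) :=
    entH_congr_inj p _ _ (fun t => (t.2.2, (t.1, t.2.1)))
      (fun u v huv => by simp [Prod.ext_iff] at huv ⊢; tauto) (fun ω => rfl)
  have S4 : entH p (fun ω => ((XB ω, XC ω), fA ω, (fB ω, fC ω)))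
      = entH p (fun ω => (XC ω, XB ω, fA ω, fB ω, fC ω)) :=
    entH_congr_inj p _ _ (fun t => ((t.2.1, t.1), t.2.2.1, (t.2.2.2.1, t.2.2.2.2)))
      (fun u v huv => by simp [Prod.ext_iff] at huv ⊢; tauto) (fun ω => rfl)
  have S5 : entH p (fun ω => ((XB ω, XC ω), (fB ω, fC ω)))
      = entH p (fun ω => ((XC ω, fC ω), (XB ω, fB ω))) :=
    entH_congr_inj p _ _ (fun t => ((t.2.1, t.1.1), (t.2.2, t.1.2)))
      (fun u v huv => by simp [Prod.ext_iff] at huv ⊢; tauto) (fun ω => rfl)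
  have S6 : entH p (fun ω => (XB ω, (fA ω, fC ω), fB ω))
      = entH p (fun ω => (XB ω, fA ω, fB ω, fC ω)) :=
    entH_congr_inj p _ _ (fun t => (t.1, (t.2.1, t.2.2.2), t.2.2.1))
      (fun u v huv => by simp [Prod.ext_iff] at huv ⊢; tauto) (fun ω => rfl)
  have S7 : entH p (fun ω => ((fA ω, fC ω), fB ω))
      = entH p (fun ω => (fA ω, fB ω, fC ω)) :=
    entH_congr_inj p _ _ (fun t => ((t.1, t.2.2), t.2.1))
      (fun u v huv => by simp [Prod.ext_iff] at huv ⊢; tauto) (fun ω => rfl)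
  have S8 : entH p (fun ω => (fA ω, fC ω, fB ω))
      = entH p (fun ω => (fA ω, fB ω, fC ω)) :=
    entH_congr_inj p _ _ (fun t => (t.1, t.2.2, t.2.1))
      (fun u v huv => by simp [Prod.ext_iff] at huv ⊢; tauto) (fun ω => rfl)
  have S9 : entH p (fun ω => (fC ω, fB ω))
      = entH p (fun ω => (fB ω, fC ω)) :=
    entH_congr_inj p _ _ (fun t => (t.2, t.1))
      (fun u v huv => by simp [Prod.ext_iff] at huv ⊢; tauto) (fun ω => rfl)
  have S10 : entH p (fun ω => ((XA ω, fA ω), (XC ω, fC ω), (XB ω, fB ω)))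
      = entH p (fun ω => (XA ω, XC ω, XB ω, fA ω, fB ω, fC ω)) :=
    entH_congr_inj p _ _
      (fun t => ((t.1, t.2.2.2.1), (t.2.1, t.2.2.2.2.2), (t.2.2.1, t.2.2.2.2.1)))
      (fun u v huv => by simp [Prod.ext_iff] at huv ⊢; tauto) (fun ω => rfl)
  rw [S1, S2, S3] at E1
  rw [S4, S5] at E2
  rw [S6, S7] at E3
  rw [S8, S9] at E4
  simp only [cmi]
  linarith [E1, E2, E3, E4, S10]

end
end

section
/- Let A and C be finite index sets, let U be an F2-linear subspace of (ZMod 2)^A × (ZMod 2)^C (the space of parity constraints), and let X = (X_A, X_C) be a random variable uniformly distributed on the orthogonal complement U^⊥ of U with respect to the standard coordinatewise bilinear form. Then the mutual information between X_A and X_C equals (dim π_A(U) + dim π_C(U) - dim U) · log 2, where π_A and π_C denote the coordinate projections onto (ZMod 2)^A and (ZMod 2)^C respectively, dim denotes F2-dimension, and mutual information is computed with natural logarithms. -/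
/-!
STATEMENT 1: If `X = (X_A, X_C)` is uniformly distributed on the orthogonal complement `U^⊥`
of an `F₂`-linear space `U` of parity constraints in `(ZMod 2)^A × (ZMod 2)^C`, then
`I(X_A : X_C) = (dim π_A(U) + dim π_C(U) - dim U) · log 2`.
-/

noncomputable section

/-- Mutual information `I(X : Y)`. -/
def mi {Ω S T : Type*} [Fintype Ω] [Fintype S] [Fintype T]
    (p : Ω → ℝ) (X : Ω → S) (Y : Ω → T) : ℝ :=
  entH p X + entH p Y - entH p (fun ω => (X ω, Y ω))

variable {A C : Type*} [Fintype A] [DecidableEq A] [Fintype C] [DecidableEq C]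

/-- The standard coordinatewise bilinear pairing on `(ZMod 2)^A × (ZMod 2)^C`. -/
def pairForm (x y : (A → ZMod 2) × (C → ZMod 2)) : ZMod 2 :=
  (∑ i, x.1 i * y.1 i) + ∑ j, x.2 j * y.2 j

/-- The orthogonal complement of `U` with respect to the standard bilinear form. -/
def perpSet (U : Submodule (ZMod 2) ((A → ZMod 2) × (C → ZMod 2))) :
    Set ((A → ZMod 2) × (C → ZMod 2)) :=
  {x | ∀ u ∈ U, pairForm x u = 0}

/-! ### Auxiliary lemmas -/

open Module

section Entropy

/-- Entropy of the uniform distribution on a nonempty subset. -/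
lemma sum_negMulLog_indicator {S : Type*} [Fintype S] (T : Set S) (hT : T.Nonempty) :
    ∑ s, Real.negMulLog (Set.indicator T (fun _ => ((Nat.card T : ℝ))⁻¹) s)
      = Real.log (Nat.card T) := by
  classical
  haveI : Nonempty T := hT.to_subtype
  set m : ℕ := Nat.card T with hm
  have hm0 : 0 < m := Nat.card_pos
  have hmne : ((m : ℝ)) ≠ 0 := Nat.cast_ne_zero.mpr hm0.ne'
  have hcard : (Finset.univ.filter (· ∈ T)).card = m := by
    rw [hm, Nat.card_eq_fintype_card, Fintype.card_subtype]
  simp only [Set.indicator_apply, apply_ite Real.negMulLog, Real.negMulLog_zero]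
  rw [Finset.sum_ite, Finset.sum_const, Finset.sum_const_zero, add_zero, hcard,
    nsmul_eq_mul]
  have : Real.negMulLog ((m : ℝ))⁻¹ = (m : ℝ)⁻¹ * Real.log m := by
    simp [Real.negMulLog, Real.log_inv]
  rw [this, ← mul_assoc, mul_inv_cancel₀ hmne, one_mul]

/-- The distribution of `X` under the uniform distribution on `T`. -/
lemma distOf_uniform {Ω S : Type*} [Fintype Ω] (T : Set Ω) (p : Ω → ℝ)
    (hp : ∀ x, p x = Set.indicator T (fun _ => ((Nat.card T : ℝ))⁻¹) x)
    (X : Ω → S) (s : S) :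
    distOf p X s = (Nat.card {ω : Ω // ω ∈ T ∧ X ω = s} : ℝ) / (Nat.card T : ℝ) := by
  classical
  unfold distOf pr
  have h : ∀ ω, Set.indicator {ω' | X ω' = s} p ω
      = if ω ∈ T ∧ X ω = s then ((Nat.card T : ℝ))⁻¹ else 0 := by
    intro ω
    rw [Set.indicator_apply, hp ω, Set.indicator_apply]
    by_cases h1 : X ω = s <;> by_cases h2 : ω ∈ T <;>
      simp [h1, h2, Set.mem_setOf_eq]
  simp only [h]
  rw [Finset.sum_ite, Finset.sum_const, Finset.sum_const_zero, add_zero, nsmul_eq_mul,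
    div_eq_mul_inv]
  congr 2
  rw [Nat.card_eq_fintype_card, Fintype.card_subtype]

variable {V V' : Type*} [AddCommGroup V] [Module (ZMod 2) V] [Fintype V]
  [AddCommGroup V'] [Module (ZMod 2) V'] [Fintype V']

lemma finrank_map_add_finrank_inf_ker (φ : V →ₗ[ZMod 2] V') (W : Submodule (ZMod 2) V) :
    finrank (ZMod 2) (W.map φ)
      + finrank (ZMod 2) ((LinearMap.ker φ ⊓ W : Submodule (ZMod 2) V))
      = finrank (ZMod 2) W := by
  have h := LinearMap.finrank_range_add_finrank_ker (φ.domRestrict W)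
  rw [LinearMap.range_domRestrict, LinearMap.ker_domRestrict] at h
  have heq : (LinearMap.ker φ).comap W.subtype = (LinearMap.ker φ ⊓ W).comap W.subtype := by
    ext x; simp [x.2]
  rw [heq,
    (Submodule.comapSubtypeEquivOfLe (inf_le_right : LinearMap.ker φ ⊓ W ≤ W)).finrank_eq] at h
  exact h

lemma card_submodule (W : Submodule (ZMod 2) V) :
    Nat.card W = 2 ^ finrank (ZMod 2) W := by
  haveI : Fintype W := Fintype.ofFinite _
  rw [Nat.card_eq_fintype_card, card_eq_pow_finrank (K := ZMod 2), ZMod.card]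

/-- Entropy of the image of a uniform distribution on a submodule under a linear map. -/
lemma entH_map [DecidableEq V'] (W : Submodule (ZMod 2) V) (φ : V →ₗ[ZMod 2] V')
    (p : V → ℝ)
    (hp : ∀ x, p x = Set.indicator (W : Set V)
      (fun _ => ((Nat.card (W : Set V) : ℝ))⁻¹) x) :
    entH p ⇑φ = (finrank (ZMod 2) (W.map φ) : ℝ) * Real.log 2 := by
  classical
  set m : ℕ := Nat.card (W.map φ : Set V') with hmdef
  set k : ℕ := Nat.card (LinearMap.ker φ ⊓ W : Submodule (ZMod 2) V) with hkdef
  have hncard : Nat.card (W : Set V) = Nat.card W := rfl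
  have hmcard : m = Nat.card (W.map φ) := rfl
  have hn : Nat.card (W : Set V) = m * k := by
    rw [hncard, hmcard, hkdef, card_submodule, card_submodule, card_submodule,
      ← pow_add, finrank_map_add_finrank_inf_ker φ W]
  have hm0 : 0 < m := by
    rw [hmcard]; exact Nat.card_pos
  have hk0 : 0 < k := Nat.card_pos
  have hmne : ((m : ℝ)) ≠ 0 := Nat.cast_ne_zero.mpr hm0.ne'
  have hkne : ((k : ℝ)) ≠ 0 := Nat.cast_ne_zero.mpr hk0.ne'
  have key : ∀ s, distOf p ⇑φ s
      = Set.indicator (W.map φ : Set V') (fun _ => ((m : ℝ))⁻¹) s := by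
    intro s
    rw [distOf_uniform (W : Set V) p hp]
    by_cases hs : s ∈ W.map φ
    · rw [Set.indicator_of_mem hs]
      have hfiber : Nat.card {ω : V // ω ∈ (W : Set V) ∧ φ ω = s} = k := by
        obtain ⟨ω₀, hω₀, rfl⟩ := hs
        have e : {ω : V // ω ∈ (W : Set V) ∧ φ ω = φ ω₀}
            ≃ (LinearMap.ker φ ⊓ W : Submodule (ZMod 2) V) :=
          { toFun := fun x => ⟨x.1 - ω₀, Submodule.mem_inf.mpr
              ⟨LinearMap.mem_ker.mpr (by simp [map_sub, x.2.2]), W.sub_mem x.2.1 hω₀⟩⟩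
            invFun := fun x => ⟨x.1 + ω₀,
              W.add_mem (Submodule.mem_inf.mp x.2).2 hω₀, by
                have := LinearMap.mem_ker.mp (Submodule.mem_inf.mp x.2).1
                simp [map_add, this]⟩
            left_inv := fun x => by ext; simp
            right_inv := fun x => by ext; simp }
        rw [Nat.card_congr e]
      rw [hfiber, hn]
      push_cast
      field_simp
    · rw [Set.indicator_of_notMem hs]
      have : IsEmpty {ω : V // ω ∈ (W : Set V) ∧ φ ω = s} := by
        constructor
        rintro ⟨x, hx, rfl⟩
        exact hs ⟨x, hx, rfl⟩
      rw [Nat.card_of_isEmpty]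
      simp
  unfold entH
  simp only [key]
  rw [sum_negMulLog_indicator _ ⟨0, Submodule.zero_mem (W.map φ)⟩]
  have h2 : Nat.card (W.map φ : Set V') = 2 ^ finrank (ZMod 2) (W.map φ) :=
    card_submodule (W.map φ)
  rw [h2]
  push_cast
  rw [Real.log_pow]

end Entropy

section LinAlg

variable {K : Type*} [Field K] {V : Type*} [AddCommGroup V] [Module K V]

/-- The orthogonal complement of `U` with respect to a bilinear form, as a submodule. -/
def perpSub (B : LinearMap.BilinForm K V) (U : Submodule K V) : Submodule K V :=
  U.dualAnnihilator.comap B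

lemma mem_perpSub (B : LinearMap.BilinForm K V) (U : Submodule K V) (x : V) :
    x ∈ perpSub B U ↔ ∀ u ∈ U, B x u = 0 := by
  simp [perpSub, Submodule.mem_comap, Submodule.mem_dualAnnihilator]

lemma finrank_perpSub_add [FiniteDimensional K V] (B : LinearMap.BilinForm K V)
    (hB : B.Nondegenerate) (U : Submodule K V) :
    finrank K (perpSub B U) + finrank K U = finrank K V := by
  have he : perpSub B U = U.dualAnnihilator.comap
      ((B.toDual hB : V ≃ₗ[K] Module.Dual K V) : V →ₗ[K] Module.Dual K V) := by
    ext x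
    simp only [perpSub, Submodule.mem_comap, Submodule.mem_dualAnnihilator,
      LinearEquiv.coe_coe]
    rfl
  rw [he, Submodule.comap_equiv_eq_map_symm, LinearEquiv.finrank_map_eq,
    ← (Subspace.quotEquivAnnihilator U).finrank_eq]
  exact Submodule.finrank_quotient_add_finrank U

end LinAlg

section DotForms

variable (A C)

/-- The dot-product bilinear form on `ι → ZMod 2`. -/
def dotB (ι : Type*) [Fintype ι] : LinearMap.BilinForm (ZMod 2) (ι → ZMod 2) :=
  LinearMap.mk₂ (ZMod 2) (fun x y => ∑ i, x i * y i)
    (fun x x' y => by simp [add_mul, Finset.sum_add_distrib])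
    (fun c x y => by simp [Finset.mul_sum, mul_assoc])
    (fun x y y' => by simp [mul_add, Finset.sum_add_distrib])
    (fun c x y => by
      simp only [Pi.smul_apply, smul_eq_mul, Finset.mul_sum]
      exact Finset.sum_congr rfl fun i _ => by ring)

lemma dotB_nondeg (ι : Type*) [Fintype ι] [DecidableEq ι] : (dotB ι).Nondegenerate := by
  suffices hL : LinearMap.SeparatingLeft (dotB ι) by
    refine ⟨hL, fun y hy => hL y fun x => ?_⟩
    have e : dotB ι y x = dotB ι x y := by
      simp only [dotB, LinearMap.mk₂_apply]
      exact Finset.sum_congr rfl fun i _ => mul_comm _ _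
    rw [e]; exact hy x
  intro x h
  funext i
  have := h (Pi.single i 1)
  simp only [dotB, LinearMap.mk₂_apply, Pi.single_apply, mul_ite, mul_one, mul_zero,
    Finset.sum_ite_eq', Finset.mem_univ, if_true] at this
  simpa using this

/-- The pairing `pairForm` as a bilinear form. -/
def prodB : LinearMap.BilinForm (ZMod 2) ((A → ZMod 2) × (C → ZMod 2)) :=
  LinearMap.mk₂ (ZMod 2) pairForm
    (fun x x' y => by
      simp [pairForm, add_mul, Finset.sum_add_distrib]; ring)
    (fun c x y => by
      simp only [pairForm, Prod.smul_fst, Prod.smul_snd, Pi.smul_apply, smul_eq_mul,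
        Finset.mul_sum, mul_add]
      congr 1 <;> exact Finset.sum_congr rfl fun i _ => by ring)
    (fun x y y' => by
      simp [pairForm, mul_add, Finset.sum_add_distrib]; ring)
    (fun c x y => by
      simp only [pairForm, Prod.smul_fst, Prod.smul_snd, Pi.smul_apply, smul_eq_mul,
        Finset.mul_sum, mul_add]
      congr 1 <;> exact Finset.sum_congr rfl fun i _ => by ring)

lemma prodB_apply (x y : (A → ZMod 2) × (C → ZMod 2)) :
    prodB A C x y = pairForm x y := rfl

lemma prodB_nondeg : (prodB A C).Nondegenerate := by
  suffices hL : LinearMap.SeparatingLeft (prodB A C) by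
    refine ⟨hL, fun y hy => hL y fun x => ?_⟩
    have e : prodB A C y x = prodB A C x y := by
      simp only [prodB_apply, pairForm]
      congr 1 <;> exact Finset.sum_congr rfl fun i _ => mul_comm _ _
    rw [e]; exact hy x
  intro x h
  have h1 : x.1 = 0 := by
    funext i
    have := h (Pi.single i 1, 0)
    simp only [prodB_apply, pairForm, Pi.single_apply, mul_ite, mul_one, mul_zero,
      Finset.sum_ite_eq', Finset.mem_univ, if_true, Pi.zero_apply, Finset.sum_const_zero,
      add_zero] at this
    simpa using this
  have h2 : x.2 = 0 := by
    funext j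
    have := h (0, Pi.single j 1)
    simp only [prodB_apply, pairForm, Pi.single_apply, mul_ite, mul_one, mul_zero,
      Finset.sum_ite_eq', Finset.mem_univ, if_true, Pi.zero_apply, Finset.sum_const_zero,
      zero_add] at this
    simpa using this
  exact Prod.ext h1 h2

end DotForms

set_option maxHeartbeats 1000000 in
/-- The rank formula for the mutual information between the `A`-part and the `C`-part of a
random variable uniformly distributed on the orthogonal complement of the constraint space `U`:
`I(X_A : X_C) = (dim π_A(U) + dim π_C(U) - dim U) · log 2` (natural logarithms). -/
theorem uniform_on_code_mutual_information
    (U : Submodule (ZMod 2) ((A → ZMod 2) × (C → ZMod 2)))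
    (p : ((A → ZMod 2) × (C → ZMod 2)) → ℝ)
    (hp : ∀ x, p x =
      Set.indicator (perpSet U) (fun _ => ((Nat.card (perpSet U) : ℝ))⁻¹) x) :
    mi p Prod.fst Prod.snd =
      ((Module.finrank (ZMod 2)
          (U.map (LinearMap.fst (ZMod 2) (A → ZMod 2) (C → ZMod 2))) : ℝ)
        + (Module.finrank (ZMod 2)
            (U.map (LinearMap.snd (ZMod 2) (A → ZMod 2) (C → ZMod 2))) : ℝ)
        - (Module.finrank (ZMod 2) U : ℝ)) * Real.log 2 := by
  classical
  set W : Submodule (ZMod 2) ((A → ZMod 2) × (C → ZMod 2)) := perpSub (prodB A C) U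
    with hWdef
  have hWset : (W : Set ((A → ZMod 2) × (C → ZMod 2))) = perpSet U := by
    ext x
    simp only [SetLike.mem_coe, hWdef, mem_perpSub, prodB_apply, perpSet,
      Set.mem_setOf_eq]
  have hp' : ∀ x, p x = Set.indicator (W : Set ((A → ZMod 2) × (C → ZMod 2)))
      (fun _ => ((Nat.card (W : Set ((A → ZMod 2) × (C → ZMod 2))) : ℝ))⁻¹) x := by
    intro x
    rw [hp x, hWset]
  -- entropies
  have hfst : entH p Prod.fst
      = (finrank (ZMod 2) (W.map (LinearMap.fst (ZMod 2) (A → ZMod 2) (C → ZMod 2))) : ℝ)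
        * Real.log 2 := by
    have h1 : (Prod.fst : ((A → ZMod 2) × (C → ZMod 2)) → (A → ZMod 2))
        = ⇑(LinearMap.fst (ZMod 2) (A → ZMod 2) (C → ZMod 2)) := rfl
    rw [h1]
    exact entH_map W _ p hp'
  have hsnd : entH p Prod.snd
      = (finrank (ZMod 2) (W.map (LinearMap.snd (ZMod 2) (A → ZMod 2) (C → ZMod 2))) : ℝ)
        * Real.log 2 := by
    have h1 : (Prod.snd : ((A → ZMod 2) × (C → ZMod 2)) → (C → ZMod 2))
        = ⇑(LinearMap.snd (ZMod 2) (A → ZMod 2) (C → ZMod 2)) := rfl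
    rw [h1]
    exact entH_map W _ p hp'
  have hpair : entH p (fun ω => (Prod.fst ω, Prod.snd ω))
      = (finrank (ZMod 2) W : ℝ) * Real.log 2 := by
    have h1 : (fun ω : (A → ZMod 2) × (C → ZMod 2) => (Prod.fst ω, Prod.snd ω))
        = ⇑(LinearMap.id (R := ZMod 2) (M := (A → ZMod 2) × (C → ZMod 2))) := rfl
    rw [h1, entH_map W _ p hp', Submodule.map_id]
  -- rank identities
  have eW : finrank (ZMod 2) W + finrank (ZMod 2) U
      = finrank (ZMod 2) ((A → ZMod 2) × (C → ZMod 2)) :=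
    finrank_perpSub_add (prodB A C) (prodB_nondeg A C) U
  have e4 := finrank_map_add_finrank_inf_ker
    (LinearMap.fst (ZMod 2) (A → ZMod 2) (C → ZMod 2)) W
  have e5 := finrank_map_add_finrank_inf_ker
    (LinearMap.snd (ZMod 2) (A → ZMod 2) (C → ZMod 2)) W
  -- identify the kernels
  have hkerfst : ((LinearMap.ker (LinearMap.fst (ZMod 2) (A → ZMod 2) (C → ZMod 2)) ⊓ W :
        Submodule (ZMod 2) ((A → ZMod 2) × (C → ZMod 2))))
      = (perpSub (dotB C) (U.map (LinearMap.snd (ZMod 2) (A → ZMod 2) (C → ZMod 2)))).map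
          (LinearMap.inr (ZMod 2) (A → ZMod 2) (C → ZMod 2)) := by
    ext x
    simp only [Submodule.mem_inf, LinearMap.mem_ker, LinearMap.fst_apply,
      Submodule.mem_map, LinearMap.inr_apply]
    constructor
    · rintro ⟨hx1, hxW⟩
      refine ⟨x.2, ?_, ?_⟩
      · rw [mem_perpSub]
        rintro v ⟨u, hu, rfl⟩
        have h0 := (mem_perpSub _ _ x).mp hxW u hu
        rw [prodB_apply] at h0
        simp only [pairForm, hx1, Pi.zero_apply, zero_mul, Finset.sum_const_zero,
          zero_add] at h0
        simpa [dotB] using h0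
      · exact Prod.ext hx1.symm rfl
    · rintro ⟨c, hc, rfl⟩
      refine ⟨rfl, ?_⟩
      rw [hWdef, mem_perpSub]
      intro u hu
      rw [prodB_apply]
      have h0 := (mem_perpSub _ _ c).mp hc u.2 ⟨u, hu, rfl⟩
      simp only [dotB, LinearMap.mk₂_apply] at h0
      simp [pairForm, h0]
  have hkersnd : ((LinearMap.ker (LinearMap.snd (ZMod 2) (A → ZMod 2) (C → ZMod 2)) ⊓ W :
        Submodule (ZMod 2) ((A → ZMod 2) × (C → ZMod 2))))
      = (perpSub (dotB A) (U.map (LinearMap.fst (ZMod 2) (A → ZMod 2) (C → ZMod 2)))).map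
          (LinearMap.inl (ZMod 2) (A → ZMod 2) (C → ZMod 2)) := by
    ext x
    simp only [Submodule.mem_inf, LinearMap.mem_ker, LinearMap.snd_apply,
      Submodule.mem_map, LinearMap.inl_apply]
    constructor
    · rintro ⟨hx2, hxW⟩
      refine ⟨x.1, ?_, ?_⟩
      · rw [mem_perpSub]
        rintro v ⟨u, hu, rfl⟩
        have h0 := (mem_perpSub _ _ x).mp hxW u hu
        rw [prodB_apply] at h0
        simp only [pairForm, hx2, Pi.zero_apply, zero_mul, Finset.sum_const_zero,
          add_zero] at h0
        simpa [dotB] using h0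
      · exact Prod.ext rfl hx2.symm
    · rintro ⟨a, ha, rfl⟩
      refine ⟨rfl, ?_⟩
      rw [hWdef, mem_perpSub]
      intro u hu
      rw [prodB_apply]
      have h0 := (mem_perpSub _ _ a).mp ha u.1 ⟨u, hu, rfl⟩
      simp only [dotB, LinearMap.mk₂_apply] at h0
      simp [pairForm, h0]
  have hkC : finrank (ZMod 2)
        ((LinearMap.ker (LinearMap.fst (ZMod 2) (A → ZMod 2) (C → ZMod 2)) ⊓ W :
          Submodule (ZMod 2) ((A → ZMod 2) × (C → ZMod 2))))
      = finrank (ZMod 2)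
          (perpSub (dotB C) (U.map (LinearMap.snd (ZMod 2) (A → ZMod 2) (C → ZMod 2)))) := by
    rw [hkerfst]
    exact ((Submodule.equivMapOfInjective _ LinearMap.inr_injective _).finrank_eq).symm
  have hkA : finrank (ZMod 2)
        ((LinearMap.ker (LinearMap.snd (ZMod 2) (A → ZMod 2) (C → ZMod 2)) ⊓ W :
          Submodule (ZMod 2) ((A → ZMod 2) × (C → ZMod 2))))
      = finrank (ZMod 2)
          (perpSub (dotB A) (U.map (LinearMap.fst (ZMod 2) (A → ZMod 2) (C → ZMod 2)))) := by
    rw [hkersnd]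
    exact ((Submodule.equivMapOfInjective _ LinearMap.inl_injective _).finrank_eq).symm
  have ePerpC := finrank_perpSub_add (dotB C) (dotB_nondeg C)
    (U.map (LinearMap.snd (ZMod 2) (A → ZMod 2) (C → ZMod 2)))
  have ePerpA := finrank_perpSub_add (dotB A) (dotB_nondeg A)
    (U.map (LinearMap.fst (ZMod 2) (A → ZMod 2) (C → ZMod 2)))
  have eProd : finrank (ZMod 2) ((A → ZMod 2) × (C → ZMod 2))
      = finrank (ZMod 2) (A → ZMod 2) + finrank (ZMod 2) (C → ZMod 2) :=
    Module.finrank_prod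
  -- combine
  unfold mi
  rw [hfst, hsnd, hpair]
  rw [hkC] at e4
  rw [hkA] at e5
  rw [eProd] at eW
  have hr : (finrank (ZMod 2)
        (W.map (LinearMap.fst (ZMod 2) (A → ZMod 2) (C → ZMod 2))) : ℝ)
      + (finrank (ZMod 2) (W.map (LinearMap.snd (ZMod 2) (A → ZMod 2) (C → ZMod 2))) : ℝ)
      - (finrank (ZMod 2) W : ℝ)
      = (finrank (ZMod 2)
          (U.map (LinearMap.fst (ZMod 2) (A → ZMod 2) (C → ZMod 2))) : ℝ)
        + (finrank (ZMod 2)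
            (U.map (LinearMap.snd (ZMod 2) (A → ZMod 2) (C → ZMod 2))) : ℝ)
        - (finrank (ZMod 2) U : ℝ) := by
    have hnat : finrank (ZMod 2)
          (W.map (LinearMap.fst (ZMod 2) (A → ZMod 2) (C → ZMod 2)))
        + finrank (ZMod 2) (W.map (LinearMap.snd (ZMod 2) (A → ZMod 2) (C → ZMod 2)))
        + finrank (ZMod 2) U
        = finrank (ZMod 2)
            (U.map (LinearMap.fst (ZMod 2) (A → ZMod 2) (C → ZMod 2)))
          + finrank (ZMod 2)
              (U.map (LinearMap.snd (ZMod 2) (A → ZMod 2) (C → ZMod 2)))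
          + finrank (ZMod 2) W := by
      omega
    have hc := congrArg (Nat.cast : ℕ → ℝ) hnat
    push_cast at hc
    linarith
  rw [← add_mul, ← sub_mul, hr]

end
end

section
/- Let A, B, C be finite index sets, let W be an F2-linear subspace of (ZMod 2)^A × (ZMod 2)^B × (ZMod 2)^C, and let X = (X_A, X_B, X_C) be uniformly distributed on W. Define V := π_{AC}(W ∩ ker π_B), the projection onto the A and C coordinates of the subspace of elements of W whose B-coordinates vanish. Then the conditional mutual information satisfies I(X_A : X_C | X_B) = (dim π_A(V) + dim π_C(V) - dim V) · log 2, where π_A, π_C denote coordinate projections of V onto (ZMod 2)^A and (ZMod 2)^C, dim denotes F2-dimension, and entropies use natural logarithms. -/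
/-!
STATEMENT 2: If `X = (X_A, X_B, X_C)` is uniformly distributed on an `F₂`-linear code
`W ≤ (ZMod 2)^A × (ZMod 2)^B × (ZMod 2)^C`, and `V := π_{AC}(W ∩ ker π_B)`, then
`I(X_A : X_C | X_B) = (dim π_A(V) + dim π_C(V) - dim V) · log 2`.
-/

noncomputable section

variable {A B C : Type*} [Fintype A] [DecidableEq A] [Fintype B] [DecidableEq B]
  [Fintype C] [DecidableEq C]

/-- The coordinate projection onto the `B`-part. -/
def projB : ((A → ZMod 2) × (B → ZMod 2) × (C → ZMod 2)) →ₗ[ZMod 2] (B → ZMod 2) :=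
  (LinearMap.fst (ZMod 2) (B → ZMod 2) (C → ZMod 2)).comp
    (LinearMap.snd (ZMod 2) (A → ZMod 2) ((B → ZMod 2) × (C → ZMod 2)))

/-- The coordinate projection onto the `A`- and `C`-parts. -/
def projAC :
    ((A → ZMod 2) × (B → ZMod 2) × (C → ZMod 2)) →ₗ[ZMod 2]
      ((A → ZMod 2) × (C → ZMod 2)) :=
  LinearMap.prod
    (LinearMap.fst (ZMod 2) (A → ZMod 2) ((B → ZMod 2) × (C → ZMod 2)))
    ((LinearMap.snd (ZMod 2) (B → ZMod 2) (C → ZMod 2)).comp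
      (LinearMap.snd (ZMod 2) (A → ZMod 2) ((B → ZMod 2) × (C → ZMod 2))))

/-! ### Auxiliary lemmas -/

open Module LinearMap

section Aux

variable {M N : Type*} [AddCommGroup M] [Module (ZMod 2) M] [Fintype M]
  [AddCommGroup N] [Module (ZMod 2) N]

/-- Rank–nullity for a submodule under a linear map. -/
lemma aux_rn (W : Submodule (ZMod 2) M) (f : M →ₗ[ZMod 2] N) :
    finrank (ZMod 2) (W.map f) + finrank (ZMod 2) (W ⊓ ker f : Submodule (ZMod 2) M)
      = finrank (ZMod 2) W := by
  have h := LinearMap.finrank_range_add_finrank_ker (f.domRestrict W)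
  rw [LinearMap.range_domRestrict, LinearMap.ker_domRestrict] at h
  have hco : Submodule.comap W.subtype (ker f)
      = Submodule.comap W.subtype (W ⊓ ker f) := by
    rw [Submodule.comap_inf, Submodule.comap_subtype_self, top_inf_eq]
  rw [hco, (Submodule.comapSubtypeEquivOfLe (inf_le_left : W ⊓ ker f ≤ W)).finrank_eq] at h
  exact h

/-- A map which is injective on a submodule preserves its rank. -/
lemma aux_rn_disj (W : Submodule (ZMod 2) M) (f : M →ₗ[ZMod 2] N)
    (h : W ⊓ ker f = ⊥) :
    finrank (ZMod 2) (W.map f) = finrank (ZMod 2) W := by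
  have := aux_rn W f
  rw [h, finrank_bot] at this
  omega

omit [Fintype M] in
lemma aux_card_sub [Finite M] (W : Submodule (ZMod 2) M) :
    Nat.card W = 2 ^ finrank (ZMod 2) W := by
  haveI : Fintype W := Fintype.ofFinite W
  rw [Nat.card_eq_fintype_card, card_eq_pow_finrank (K := ZMod 2), ZMod.card]

omit [Fintype M] in
lemma aux_card_fiber (W : Submodule (ZMod 2) M) (f : M →ₗ[ZMod 2] N) {s : N}
    (w0 : M) (hw0 : w0 ∈ W) (hfw0 : f w0 = s) :
    Nat.card {x : M // x ∈ W ∧ f x = s}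
      = Nat.card (W ⊓ ker f : Submodule (ZMod 2) M) := by
  apply Nat.card_congr
  refine
    { toFun := fun x => ⟨x.1 - w0, Submodule.mem_inf.2
        ⟨sub_mem x.2.1 hw0, by simp [LinearMap.mem_ker, map_sub, x.2.2, hfw0]⟩⟩
      invFun := fun y => ⟨y.1 + w0, add_mem (Submodule.mem_inf.1 y.2).1 hw0, by
        have := (Submodule.mem_inf.1 y.2).2
        rw [LinearMap.mem_ker] at this
        simp [map_add, this, hfw0]⟩
      left_inv := fun x => by simp
      right_inv := fun y => by simp }

lemma aux_distOf_uniform [Fintype N] [DecidableEq N] (W : Submodule (ZMod 2) M)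
    (f : M →ₗ[ZMod 2] N) (p : M → ℝ)
    (hp : ∀ x, p x = Set.indicator (W : Set M) (fun _ => ((Nat.card W : ℝ))⁻¹) x)
    (s : N) :
    distOf p (fun x => f x) s
      = Set.indicator (W.map f : Set N) (fun _ => ((Nat.card (W.map f) : ℝ))⁻¹) s := by
  classical
  unfold distOf pr
  have step : ∀ x : M, Set.indicator {x | f x = s} p x
      = if x ∈ W ∧ f x = s then ((Nat.card W : ℝ))⁻¹ else 0 := by
    intro x
    rw [Set.indicator_apply]
    by_cases h1 : f x = s <;> by_cases h2 : x ∈ W <;>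
      simp [h1, h2, hp x, Set.indicator_apply]
  rw [Finset.sum_congr rfl fun x _ => step x, ← Finset.sum_filter]
  rw [Finset.sum_const]
  have hcard : (Finset.univ.filter (fun x : M => x ∈ W ∧ f x = s)).card
      = Nat.card {x : M // x ∈ W ∧ f x = s} := by
    rw [Nat.card_eq_fintype_card, Fintype.card_subtype]
  by_cases hs : s ∈ W.map f
  · obtain ⟨w0, hw0, hfw0⟩ := hs
    rw [hcard, aux_card_fiber W f w0 hw0 hfw0]
    have hmem : s ∈ (W.map f : Set N) := ⟨w0, hw0, hfw0⟩
    rw [Set.indicator_of_mem hmem]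
    have h1 := aux_rn W f
    rw [aux_card_sub, aux_card_sub, aux_card_sub, ← h1]
    push_cast
    rw [pow_add]
    field_simp
    simp only [nsmul_eq_mul, smul_eq_mul]
    push_cast
    field_simp
  · have hemp : Finset.univ.filter (fun x : M => x ∈ W ∧ f x = s) = ∅ := by
      apply Finset.filter_eq_empty_iff.2
      rintro x - ⟨hxW, hxf⟩
      exact hs ⟨x, hxW, hxf⟩
    rw [hemp, Set.indicator_of_notMem (by exact hs)]
    simp

lemma aux_entH_uniform [Fintype N] [DecidableEq N] (W : Submodule (ZMod 2) M)
    (f : M →ₗ[ZMod 2] N) (p : M → ℝ)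
    (hp : ∀ x, p x = Set.indicator (W : Set M) (fun _ => ((Nat.card W : ℝ))⁻¹) x) :
    entH p (fun x => f x)
      = (finrank (ZMod 2) (W.map f) : ℝ) * Real.log 2 := by
  classical
  unfold entH
  rw [Finset.sum_congr rfl fun s _ => by rw [aux_distOf_uniform W f p hp s]]
  set n : ℕ := Nat.card (W.map f) with hn
  have hnpos : 0 < n := Nat.card_pos
  have key : ∀ s : N,
      Real.negMulLog (Set.indicator (W.map f : Set N) (fun _ => ((n : ℝ))⁻¹) s)
        = if s ∈ W.map f then (n : ℝ)⁻¹ * Real.log n else 0 := by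
    intro s
    by_cases h : s ∈ W.map f
    · rw [Set.indicator_of_mem h]
      simp only [h, if_true, Real.negMulLog, Real.log_inv]
      ring
    · rw [Set.indicator_of_notMem h]
      simp [h, Real.negMulLog]
  rw [Finset.sum_congr rfl fun s _ => key s, ← Finset.sum_filter, Finset.sum_const]
  have hc : (Finset.univ.filter (fun s : N => s ∈ W.map f)).card = n := by
    rw [hn, Nat.card_eq_fintype_card, Fintype.card_subtype]
  rw [hc, nsmul_eq_mul]
  have hn2 : (n : ℝ) = 2 ^ finrank (ZMod 2) (W.map f) := by
    rw [hn, aux_card_sub]; push_cast; ring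
  rw [hn2, Real.log_pow]
  have h2 : (2 : ℝ) ^ finrank (ZMod 2) (W.map f) ≠ 0 := by positivity
  field_simp

end Aux

/-! ### The named coordinate maps -/

/-- Projection onto the `A`-part. -/
def projA : ((A → ZMod 2) × (B → ZMod 2) × (C → ZMod 2)) →ₗ[ZMod 2] (A → ZMod 2) :=
  LinearMap.fst (ZMod 2) (A → ZMod 2) ((B → ZMod 2) × (C → ZMod 2))

/-- Projection onto the `C`-part. -/
def projC : ((A → ZMod 2) × (B → ZMod 2) × (C → ZMod 2)) →ₗ[ZMod 2] (C → ZMod 2) :=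
  (LinearMap.snd (ZMod 2) (B → ZMod 2) (C → ZMod 2)).comp
    (LinearMap.snd (ZMod 2) (A → ZMod 2) ((B → ZMod 2) × (C → ZMod 2)))

/-- The pair `(X, Z)` as a linear map. -/
def phiXZ : ((A → ZMod 2) × (B → ZMod 2) × (C → ZMod 2)) →ₗ[ZMod 2]
    ((A → ZMod 2) × (B → ZMod 2)) :=
  LinearMap.prod projA projB

/-- The pair `(Y, Z)` as a linear map. -/
def phiYZ : ((A → ZMod 2) × (B → ZMod 2) × (C → ZMod 2)) →ₗ[ZMod 2]
    ((C → ZMod 2) × (B → ZMod 2)) :=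
  LinearMap.prod projC projB

/-- The triple `(X, Y, Z)` as a linear map. -/
def phiXYZ : ((A → ZMod 2) × (B → ZMod 2) × (C → ZMod 2)) →ₗ[ZMod 2]
    ((A → ZMod 2) × (C → ZMod 2) × (B → ZMod 2)) :=
  LinearMap.prod projA (LinearMap.prod projC projB)

@[simp] lemma projA_apply (x : (A → ZMod 2) × (B → ZMod 2) × (C → ZMod 2)) :
    projA x = x.1 := rfl
@[simp] lemma projB_apply (x : (A → ZMod 2) × (B → ZMod 2) × (C → ZMod 2)) :
    projB x = x.2.1 := rfl
@[simp] lemma projC_apply (x : (A → ZMod 2) × (B → ZMod 2) × (C → ZMod 2)) :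
    projC x = x.2.2 := rfl
@[simp] lemma projAC_apply (x : (A → ZMod 2) × (B → ZMod 2) × (C → ZMod 2)) :
    projAC x = (x.1, x.2.2) := rfl
@[simp] lemma phiXZ_apply (x : (A → ZMod 2) × (B → ZMod 2) × (C → ZMod 2)) :
    phiXZ x = (x.1, x.2.1) := rfl
@[simp] lemma phiYZ_apply (x : (A → ZMod 2) × (B → ZMod 2) × (C → ZMod 2)) :
    phiYZ x = (x.2.2, x.2.1) := rfl
@[simp] lemma phiXYZ_apply (x : (A → ZMod 2) × (B → ZMod 2) × (C → ZMod 2)) :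
    phiXYZ x = (x.1, x.2.2, x.2.1) := rfl

set_option maxHeartbeats 1000000 in
/-- The CMI of the uniform distribution on a linear code `W` is given by the rank formula
applied to `V = π_{AC}(W ∩ ker π_B)`:
`I(X_A : X_C | X_B) = (dim π_A(V) + dim π_C(V) - dim V) · log 2`. -/
theorem uniform_on_code_cmi
    (W : Submodule (ZMod 2) ((A → ZMod 2) × (B → ZMod 2) × (C → ZMod 2)))
    (p : ((A → ZMod 2) × (B → ZMod 2) × (C → ZMod 2)) → ℝ)
    (hp : ∀ x, p x =
      Set.indicator (W : Set ((A → ZMod 2) × (B → ZMod 2) × (C → ZMod 2)))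
        (fun _ => ((Nat.card W : ℝ))⁻¹) x) :
    cmi p (fun x => x.1) (fun x => x.2.2) (fun x => x.2.1) =
      ((Module.finrank (ZMod 2)
          (((W ⊓ LinearMap.ker (projB (A := A) (B := B) (C := C))).map projAC).map
            (LinearMap.fst (ZMod 2) (A → ZMod 2) (C → ZMod 2))) : ℝ)
        + (Module.finrank (ZMod 2)
            (((W ⊓ LinearMap.ker (projB (A := A) (B := B) (C := C))).map projAC).map
              (LinearMap.snd (ZMod 2) (A → ZMod 2) (C → ZMod 2))) : ℝ)
        - (Module.finrank (ZMod 2)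
            ((W ⊓ LinearMap.ker (projB (A := A) (B := B) (C := C))).map projAC) : ℝ))
        * Real.log 2 := by
  classical
  -- abbreviations
  set K : Submodule (ZMod 2) ((A → ZMod 2) × (B → ZMod 2) × (C → ZMod 2)) :=
    W ⊓ ker (projB (A := A) (B := B) (C := C)) with hK
  set V : Submodule (ZMod 2) ((A → ZMod 2) × (C → ZMod 2)) := K.map projAC with hV
  -- rewrite the CMI as a combination of ranks
  have ecmi : cmi p (fun x => x.1) (fun x => x.2.2) (fun x => x.2.1)
      = entH p (fun x => phiXZ x) + entH p (fun x => phiYZ x)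
        - entH p (fun x => projB x) - entH p (fun x => phiXYZ x) := rfl
  rw [ecmi, aux_entH_uniform W phiXZ p hp, aux_entH_uniform W phiYZ p hp,
    aux_entH_uniform W projB p hp, aux_entH_uniform W phiXYZ p hp]
  set nB : ℕ := finrank (ZMod 2) (W.map projB) with hnB
  -- rank of the full code
  have c1 : finrank (ZMod 2) (W.map phiXYZ) = nB + finrank (ZMod 2) V := by
    have hker : W ⊓ ker phiXYZ = ⊥ := by
      rw [eq_bot_iff]
      intro x hx
      obtain ⟨-, hx⟩ := Submodule.mem_inf.1 hx
      rw [LinearMap.mem_ker, phiXYZ_apply] at hx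
      have h1 : x.1 = 0 := congrArg Prod.fst hx
      have h2 : x.2.2 = 0 := congrArg (fun y => y.2.1) hx
      have h3 : x.2.1 = 0 := congrArg (fun y => y.2.2) hx
      simp only [Submodule.mem_bot]
      exact Prod.ext h1 (Prod.ext h3 h2)
    have e1 : finrank (ZMod 2) (W.map phiXYZ) = finrank (ZMod 2) W :=
      aux_rn_disj W phiXYZ hker
    have e2 := aux_rn W (projB (A := A) (B := B) (C := C))
    have e3 : finrank (ZMod 2) V = finrank (ZMod 2) K := by
      apply aux_rn_disj
      rw [eq_bot_iff]
      intro x hx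
      obtain ⟨hxK, hxAC⟩ := Submodule.mem_inf.1 hx
      rw [hK] at hxK
      obtain ⟨-, hxB⟩ := Submodule.mem_inf.1 hxK
      rw [LinearMap.mem_ker, projB_apply] at hxB
      rw [LinearMap.mem_ker, projAC_apply] at hxAC
      have h1 : x.1 = 0 := congrArg Prod.fst hxAC
      have h2 : x.2.2 = 0 := congrArg Prod.snd hxAC
      simp only [Submodule.mem_bot]
      exact Prod.ext h1 (Prod.ext hxB h2)
    rw [e1, ← e2, ← hK, e3, hnB]
  -- rank of the AB-marginal
  have c2 : finrank (ZMod 2) (W.map phiXZ)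
      = nB + finrank (ZMod 2)
          (V.map (LinearMap.fst (ZMod 2) (A → ZMod 2) (C → ZMod 2))) := by
    set P : Submodule (ZMod 2) ((A → ZMod 2) × (B → ZMod 2)) := W.map phiXZ with hP
    have h0 := aux_rn P (LinearMap.snd (ZMod 2) (A → ZMod 2) (B → ZMod 2))
    have hmarg : P.map (LinearMap.snd (ZMod 2) (A → ZMod 2) (B → ZMod 2))
        = W.map projB := by
      have hcomp : (LinearMap.snd (ZMod 2) (A → ZMod 2) (B → ZMod 2)).comp phiXZ
          = projB (A := A) (B := B) (C := C) := LinearMap.ext fun x => rfl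
      calc P.map (LinearMap.snd (ZMod 2) (A → ZMod 2) (B → ZMod 2))
          = (W.map phiXZ).map (LinearMap.snd (ZMod 2) (A → ZMod 2) (B → ZMod 2)) := by
            rw [hP]
        _ = W.map ((LinearMap.snd (ZMod 2) (A → ZMod 2) (B → ZMod 2)).comp phiXZ) :=
            (Submodule.map_comp phiXZ (LinearMap.snd (ZMod 2) (A → ZMod 2) (B → ZMod 2)) W).symm
        _ = W.map projB := by rw [hcomp]
    have hinj : finrank (ZMod 2)
        ((P ⊓ ker (LinearMap.snd (ZMod 2) (A → ZMod 2) (B → ZMod 2))).map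
          (LinearMap.fst (ZMod 2) (A → ZMod 2) (B → ZMod 2)))
        = finrank (ZMod 2)
          (P ⊓ ker (LinearMap.snd (ZMod 2) (A → ZMod 2) (B → ZMod 2)) :
            Submodule (ZMod 2) _) := by
      apply aux_rn_disj
      rw [eq_bot_iff]
      intro x hx
      obtain ⟨hx1, hx2⟩ := Submodule.mem_inf.1 hx
      obtain ⟨-, hxs⟩ := Submodule.mem_inf.1 hx1
      rw [LinearMap.mem_ker, LinearMap.snd_apply] at hxs
      rw [LinearMap.mem_ker, LinearMap.fst_apply] at hx2
      simp only [Submodule.mem_bot]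
      exact Prod.ext hx2 hxs
    have hset : (P ⊓ ker (LinearMap.snd (ZMod 2) (A → ZMod 2) (B → ZMod 2))).map
          (LinearMap.fst (ZMod 2) (A → ZMod 2) (B → ZMod 2))
        = V.map (LinearMap.fst (ZMod 2) (A → ZMod 2) (C → ZMod 2)) := by
      ext a
      simp only [Submodule.mem_map, Submodule.mem_inf, LinearMap.mem_ker, hP, hV, hK,
        phiXZ_apply, projAC_apply, projB_apply, LinearMap.fst_apply, LinearMap.snd_apply]
      constructor
      · rintro ⟨y, ⟨⟨w, hw, rfl⟩, h2⟩, h1⟩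
        exact ⟨(w.1, w.2.2), ⟨w, ⟨hw, h2⟩, rfl⟩, h1⟩
      · rintro ⟨v, ⟨w, ⟨hw, hb⟩, rfl⟩, h1⟩
        exact ⟨(w.1, w.2.1), ⟨⟨w, hw, rfl⟩, hb⟩, h1⟩
    rw [hmarg, ← hnB] at h0
    rw [hset] at hinj
    omega
  -- rank of the CB-marginal
  have c3 : finrank (ZMod 2) (W.map phiYZ)
      = nB + finrank (ZMod 2)
          (V.map (LinearMap.snd (ZMod 2) (A → ZMod 2) (C → ZMod 2))) := by
    set P : Submodule (ZMod 2) ((C → ZMod 2) × (B → ZMod 2)) := W.map phiYZ with hP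
    have h0 := aux_rn P (LinearMap.snd (ZMod 2) (C → ZMod 2) (B → ZMod 2))
    have hmarg : P.map (LinearMap.snd (ZMod 2) (C → ZMod 2) (B → ZMod 2))
        = W.map projB := by
      have hcomp : (LinearMap.snd (ZMod 2) (C → ZMod 2) (B → ZMod 2)).comp phiYZ
          = projB (A := A) (B := B) (C := C) := LinearMap.ext fun x => rfl
      calc P.map (LinearMap.snd (ZMod 2) (C → ZMod 2) (B → ZMod 2))
          = (W.map phiYZ).map (LinearMap.snd (ZMod 2) (C → ZMod 2) (B → ZMod 2)) := by
            rw [hP]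
        _ = W.map ((LinearMap.snd (ZMod 2) (C → ZMod 2) (B → ZMod 2)).comp phiYZ) :=
            (Submodule.map_comp phiYZ (LinearMap.snd (ZMod 2) (C → ZMod 2) (B → ZMod 2)) W).symm
        _ = W.map projB := by rw [hcomp]
    have hinj : finrank (ZMod 2)
        ((P ⊓ ker (LinearMap.snd (ZMod 2) (C → ZMod 2) (B → ZMod 2))).map
          (LinearMap.fst (ZMod 2) (C → ZMod 2) (B → ZMod 2)))
        = finrank (ZMod 2)
          (P ⊓ ker (LinearMap.snd (ZMod 2) (C → ZMod 2) (B → ZMod 2)) :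
            Submodule (ZMod 2) _) := by
      apply aux_rn_disj
      rw [eq_bot_iff]
      intro x hx
      obtain ⟨hx1, hx2⟩ := Submodule.mem_inf.1 hx
      obtain ⟨-, hxs⟩ := Submodule.mem_inf.1 hx1
      rw [LinearMap.mem_ker, LinearMap.snd_apply] at hxs
      rw [LinearMap.mem_ker, LinearMap.fst_apply] at hx2
      simp only [Submodule.mem_bot]
      exact Prod.ext hx2 hxs
    have hset : (P ⊓ ker (LinearMap.snd (ZMod 2) (C → ZMod 2) (B → ZMod 2))).map
          (LinearMap.fst (ZMod 2) (C → ZMod 2) (B → ZMod 2))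
        = V.map (LinearMap.snd (ZMod 2) (A → ZMod 2) (C → ZMod 2)) := by
      ext a
      simp only [Submodule.mem_map, Submodule.mem_inf, LinearMap.mem_ker, hP, hV, hK,
        phiYZ_apply, projAC_apply, projB_apply, LinearMap.fst_apply, LinearMap.snd_apply]
      constructor
      · rintro ⟨y, ⟨⟨w, hw, rfl⟩, h2⟩, h1⟩
        exact ⟨(w.1, w.2.2), ⟨w, ⟨hw, h2⟩, rfl⟩, h1⟩
      · rintro ⟨v, ⟨w, ⟨hw, hb⟩, rfl⟩, h1⟩
        exact ⟨(w.2.2, w.2.1), ⟨⟨w, hw, rfl⟩, hb⟩, h1⟩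
    rw [hmarg, ← hnB] at h0
    rw [hset] at hinj
    omega
  rw [c1, c2, c3]
  push_cast
  ring

end
end

section
/- Let R be a random variable uniform on {0, 1}, let F be a finitely-valued random variable independent of R, and let M be a finitely-valued random variable, all on a finite probability space. Let G be a set of values of F with the following properties: for every f ∈ G with P(F = f) > 0, there is a function h_f such that h_f(M) = R almost surely on the event {F = f}; and for every f ∉ G with P(F = f) > 0, M and R are conditionally independent given F = f. Then the mutual information satisfies I(R : (F, M)) = P(F ∈ G) · log 2. -/
/-!
STATEMENT 6: If `R` is a uniform bit independent of the flag `F`, and there is a set `G` of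
flag values such that on `{F = f}` for `f ∈ G` the bit `R` is a function of `M`, while for
`f ∉ G` the output `M` is conditionally independent of `R` given `F = f`, then
`I(R : (F, M)) = P(F ∈ G) · log 2`.
-/

noncomputable section

lemma pr_eq {Ω : Type*} [Fintype Ω] (p : Ω → ℝ) (E : Set Ω) [DecidablePred (· ∈ E)] :
    pr p E = ∑ ω, if ω ∈ E then p ω else 0 := by
  unfold pr; congr 1; ext ω; simp [Set.indicator_apply]

lemma pr_congr {Ω : Type*} [Fintype Ω] (p : Ω → ℝ) {E E' : Set Ω}
    (h : ∀ ω, ω ∈ E ↔ ω ∈ E') : pr p E = pr p E' := by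
  unfold pr; congr 1; ext ω; rw [Set.ext h]

lemma pr_mono {Ω : Type*} [Fintype Ω] {p : Ω → ℝ} (hp0 : ∀ ω, 0 ≤ p ω) {E E' : Set Ω}
    (h : E ⊆ E') : pr p E ≤ pr p E' := by
  classical
  rw [pr_eq, pr_eq]
  refine Finset.sum_le_sum fun ω _ => ?_
  by_cases hω : ω ∈ E
  · simp [hω, h hω]
  · by_cases hω' : ω ∈ E' <;> simp [hω, hω', hp0 ω]

lemma pr_split {Ω S : Type*} [Fintype Ω] [Fintype S] (p : Ω → ℝ) (E : Set Ω) (X : Ω → S) :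
    pr p E = ∑ s, pr p {ω | X ω = s ∧ ω ∈ E} := by
  classical
  simp only [pr_eq]
  rw [Finset.sum_comm]
  refine Finset.sum_congr rfl fun ω _ => ?_
  by_cases hE : ω ∈ E <;> simp [hE, Set.mem_setOf_eq]

lemma negMulLog_half (x : ℝ) (hx : 0 ≤ x) :
    Real.negMulLog (x / 2) + Real.negMulLog (x / 2)
      = Real.negMulLog x + x * Real.log 2 := by
  rcases eq_or_lt_of_le hx with h | h
  · simp [← h]
  · simp only [Real.negMulLog, Real.log_div (ne_of_gt h) two_ne_zero]
    ring


/-- The input–output mutual information of the heralded channel equals the probability that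
the flag lies in the "good" set `G` times `log 2`. -/
theorem heralded_mutual_information
    {Ω FV MV : Type*} [Fintype Ω] [Fintype FV] [Fintype MV]
    (p : Ω → ℝ) (hp0 : ∀ ω, 0 ≤ p ω) (hp1 : ∑ ω, p ω = 1)
    (R : Ω → Bool) (F : Ω → FV) (M : Ω → MV)
    (hR : ∀ b, pr p {ω | R ω = b} = 1 / 2)
    (hRF : ∀ (b : Bool) (f : FV),
      pr p {ω | R ω = b ∧ F ω = f} = pr p {ω | R ω = b} * pr p {ω | F ω = f})
    (G : Set FV)
    (hG : ∀ f ∈ G, 0 < pr p {ω | F ω = f} →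
      ∃ h : MV → Bool, ∀ ω, p ω ≠ 0 → F ω = f → h (M ω) = R ω)
    (hGc : ∀ f ∉ G, 0 < pr p {ω | F ω = f} →
      ∀ (m : MV) (b : Bool),
        pr p {ω | M ω = m ∧ R ω = b ∧ F ω = f} * pr p {ω | F ω = f} =
          pr p {ω | M ω = m ∧ F ω = f} * pr p {ω | R ω = b ∧ F ω = f}) :
    mi p R (fun ω => (F ω, M ω)) = pr p {ω | F ω ∈ G} * Real.log 2 := by
  classical
  set Pf : FV → ℝ := fun f => pr p {ω | F ω = f} with hPfdef
  set q : FV → MV → ℝ := fun f m => pr p {ω | F ω = f ∧ M ω = m} with hqdef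
  set r : Bool → FV → MV → ℝ := fun b f m => pr p {ω | R ω = b ∧ F ω = f ∧ M ω = m}
    with hrdef
  -- basic facts
  have hq_split : ∀ f m, q f m = r true f m + r false f m := by
    intro f m
    have := pr_split p {ω | F ω = f ∧ M ω = m} R
    rw [Fintype.sum_bool] at this
    simpa [hqdef, hrdef, Set.mem_setOf_eq, and_assoc] using this
  have hq_nonneg : ∀ f m, 0 ≤ q f m := fun f m => pr_nonneg hp0 _
  have hPf_nonneg : ∀ f, 0 ≤ Pf f := fun f => pr_nonneg hp0 _
  have hPf_split : ∀ f, Pf f = ∑ m, q f m := by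
    intro f
    show pr p {ω | F ω = f} = ∑ m, q f m
    rw [pr_split p {ω | F ω = f} M]
    refine Finset.sum_congr rfl fun m _ => pr_congr p fun ω => by
      simp [Set.mem_setOf_eq]; tauto
  -- entropy of R
  have hHR : entH p R = Real.log 2 := by
    simp only [entH, distOf, Fintype.sum_bool, hR]
    rw [show ((1:ℝ)/2) = 2⁻¹ by norm_num]
    simp [Real.negMulLog, Real.log_inv]
    ring
  -- entropy of (F, M)
  have hHFM : entH p (fun ω => (F ω, M ω)) = ∑ f, ∑ m, Real.negMulLog (q f m) := by
    simp only [entH, distOf, Fintype.sum_prod_type]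
    refine Finset.sum_congr rfl fun f _ => Finset.sum_congr rfl fun m _ => ?_
    congr 1
    exact pr_congr p fun ω => by simp [Set.mem_setOf_eq, Prod.ext_iff]
  -- entropy of joint
  have hHJ : entH p (fun ω => (R ω, F ω, M ω))
      = ∑ f, ∑ m, (Real.negMulLog (r true f m) + Real.negMulLog (r false f m)) := by
    simp only [entH, distOf, Fintype.sum_prod_type]
    rw [Fintype.sum_bool, ← Finset.sum_add_distrib]
    refine Finset.sum_congr rfl fun f _ => ?_
    rw [← Finset.sum_add_distrib]
    refine Finset.sum_congr rfl fun m _ => ?_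
    congr 2 <;> exact pr_congr p fun ω => by simp [Set.mem_setOf_eq, Prod.ext_iff]
  -- per-flag computation
  have key : ∀ f, ∑ m, (Real.negMulLog (r true f m) + Real.negMulLog (r false f m))
      = ∑ m, Real.negMulLog (q f m) + (if f ∈ G then 0 else Pf f * Real.log 2) := by
    intro f
    by_cases hpos : 0 < Pf f
    · by_cases hfG : f ∈ G
      · -- deterministic case
        obtain ⟨h, hh⟩ := hG f hfG hpos
        have hr0 : ∀ m b, b ≠ h m → r b f m = 0 := by
          intro m b hb
          rw [hrdef]
          simp only
          rw [pr_eq]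
          refine Finset.sum_eq_zero fun ω _ => ?_
          by_cases hω : ω ∈ {ω | R ω = b ∧ F ω = f ∧ M ω = m}
          · simp only [Set.mem_setOf_eq] at hω
            obtain ⟨h1, h2, h3⟩ := hω
            by_cases hpω : p ω = 0
            · simp [hpω]
            · exact absurd (by rw [← h3, hh ω hpω h2, h1]) hb
          · simp [hω]
        simp only [if_pos hfG, add_zero]
        refine Finset.sum_congr rfl fun m _ => ?_
        cases hm : h m
        · rw [hr0 m true (by simp [hm]), hq_split f m, hr0 m true (by simp [hm])]
          simp
        · rw [hr0 m false (by simp [hm]), hq_split f m, hr0 m false (by simp [hm])]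
          simp
      · -- conditionally independent case
        have hr_half : ∀ b m, r b f m = q f m / 2 := by
          intro b m
          have h1 := hGc f hfG hpos m b
          have h2 : pr p {ω | M ω = m ∧ R ω = b ∧ F ω = f} = r b f m :=
            pr_congr p fun ω => by simp [Set.mem_setOf_eq]; tauto
          have h3 : pr p {ω | M ω = m ∧ F ω = f} = q f m :=
            pr_congr p fun ω => by simp [Set.mem_setOf_eq]; tauto
          have h4 : pr p {ω | R ω = b ∧ F ω = f} = 1 / 2 * Pf f := by
            rw [hRF b f, hR b]
          rw [h2, h3, h4] at h1
          have hPfrfl : pr p {ω | F ω = f} = Pf f := rfl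
          rw [hPfrfl] at h1
          have h5 : r b f m * Pf f = q f m / 2 * Pf f := by rw [h1]; ring
          exact mul_right_cancel₀ (ne_of_gt hpos) h5
        simp only [if_neg hfG]
        rw [hPf_split f, Finset.sum_mul, ← Finset.sum_add_distrib]
        refine Finset.sum_congr rfl fun m _ => ?_
        rw [hr_half true m, hr_half false m]
        exact negMulLog_half (q f m) (hq_nonneg f m)
    · -- zero-probability flag
      have hPf0 : Pf f = 0 := le_antisymm (not_lt.mp hpos) (hPf_nonneg f)
      have hq0 : ∀ m, q f m = 0 := by
        intro m
        refine le_antisymm ?_ (hq_nonneg f m)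
        rw [← hPf0]
        exact pr_mono hp0 fun ω hω => hω.1
      have hr0 : ∀ b m, r b f m = 0 := by
        intro b m
        refine le_antisymm ?_ (pr_nonneg hp0 _)
        rw [← hPf0]
        exact pr_mono hp0 fun ω hω => hω.2.1
      simp [hq0, hr0, hPf0]
  -- total probability of G
  have hPG : pr p {ω | F ω ∈ G} = ∑ f, (if f ∈ G then Pf f else 0) := by
    rw [pr_split p {ω | F ω ∈ G} F]
    refine Finset.sum_congr rfl fun f _ => ?_
    by_cases hf : f ∈ G
    · rw [if_pos hf]
      exact pr_congr p fun ω =>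
        ⟨fun h => h.1, fun h => ⟨h, show F ω ∈ G by rw [show F ω = f from h]; exact hf⟩⟩
    · rw [if_neg hf]
      have : {ω | F ω = f ∧ ω ∈ {ω | F ω ∈ G}} = (∅ : Set Ω) := by
        ext ω; simp only [Set.mem_setOf_eq, Set.mem_empty_iff_false, iff_false]
        rintro ⟨h1, h2⟩; rw [h1] at h2; exact hf h2
      rw [this]; simp [pr]
  have hPf_total : ∑ f, Pf f = 1 := by
    have huniv : pr p (Set.univ : Set Ω) = 1 := by
      unfold pr; simpa using hp1
    have h2 := pr_split p (Set.univ : Set Ω) F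
    rw [huniv] at h2
    rw [h2]
    exact Finset.sum_congr rfl fun f _ => pr_congr p fun ω => by simp
  have hcompl : ∑ f, (if f ∈ G then 0 else Pf f) = 1 - pr p {ω | F ω ∈ G} := by
    rw [hPG, ← hPf_total, ← Finset.sum_sub_distrib]
    refine Finset.sum_congr rfl fun f _ => ?_
    by_cases hf : f ∈ G <;> simp [hf]
  -- put it all together
  have hHJ' : entH p (fun ω => (R ω, F ω, M ω))
      = entH p (fun ω => (F ω, M ω)) + (1 - pr p {ω | F ω ∈ G}) * Real.log 2 := by
    rw [hHJ, hHFM]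
    calc ∑ f, ∑ m, (Real.negMulLog (r true f m) + Real.negMulLog (r false f m))
        = ∑ f, (∑ m, Real.negMulLog (q f m) + (if f ∈ G then 0 else Pf f * Real.log 2)) :=
          Finset.sum_congr rfl fun f _ => key f
      _ = ∑ f, ∑ m, Real.negMulLog (q f m) + ∑ f, (if f ∈ G then 0 else Pf f * Real.log 2) :=
          Finset.sum_add_distrib
      _ = ∑ f, ∑ m, Real.negMulLog (q f m) + (∑ f, (if f ∈ G then 0 else Pf f)) * Real.log 2 := by
          rw [Finset.sum_mul]
          congr 1
          refine Finset.sum_congr rfl fun f _ => ?_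
          by_cases hf : f ∈ G <;> simp [hf]
      _ = _ := by rw [hcompl]
  unfold mi
  rw [hHR, hHJ']
  ring

end
end
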